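/- Let n ≥ 2, let g₀ be a real symmetric positive definite n×n matrix and h a real symmetric n×n matrix. Set H = g₀⁻¹h, τ = Tr(H), H₀ = H − (τ/n)·Id, and suppose κ := Tr(H₀²) > 0 and τ ≥ 0. Define for t ≥ 0: a(t) = (2/n)·log((1 + tτ/4)² + (n·κ/16)·t²) and b(t) = (4/√(nκ))·arctan( (√(nκ)·t) / (4 + tτ) ) (with arctan taken in [0, π/2)). Then the curve g(t) = g₀·exp(a(t)·Id + b(t)·H₀) satisfies g(0) = g₀, g′(0) = h, and the geodesic equation g″ = (1/4)·Tr(g⁻¹g′g⁻¹g′)·g + g′g⁻¹g′ − (1/2)·Tr(g⁻¹g′)·g′ for all t ≥ 0. -/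

import Mathlib

open Matrix

section auxExp
attribute [local instance] Matrix.linftyOpNormedRing Matrix.linftyOpNormedAlgebra

theorem aux_exp_smul_entry_hasDerivAt {n : ℕ} (X : Matrix (Fin n) (Fin n) ℝ) (c : ℝ) (i j : Fin n) :
    HasDerivAt (fun s : ℝ => (NormedSpace.exp (s • X)) i j)
      ((NormedSpace.exp (c • X) * X) i j) c := by
  have hd := hasDerivAt_exp_smul_const (𝕂 := ℝ) X c
  let L : Matrix (Fin n) (Fin n) ℝ →ₗ[ℝ] ℝ :=
    Matrix.entryLinearMap ℝ ℝ i j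
  have := (L.toContinuousLinearMap.hasFDerivAt).comp_hasDerivAt c hd
  exact this

theorem aux_exp_smul_one {n : ℕ} (c : ℝ) :
    NormedSpace.exp (c • (1 : Matrix (Fin n) (Fin n) ℝ)) = Real.exp c • 1 := by
  have := NormedSpace.algebraMap_exp_comm (𝕂 := ℝ) (𝔸 := Matrix (Fin n) (Fin n) ℝ) c
  rw [Algebra.algebraMap_eq_smul_one, Algebra.algebraMap_eq_smul_one, ← Real.exp_eq_exp_ℝ] at this
  exact this.symm

theorem aux_exp_mul_exp_neg {n : ℕ} (X : Matrix (Fin n) (Fin n) ℝ) :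
    NormedSpace.exp X * NormedSpace.exp (-X) = 1 := by
  rw [← Matrix.exp_add_of_commute _ _ (Commute.refl X).neg_right, add_neg_cancel,
    NormedSpace.exp_zero]

end auxExp

section auxPi
attribute [local instance] Matrix.normedAddCommGroup Matrix.normedSpace

theorem aux_hasDerivAt_entries {n : ℕ} {f : ℝ → Matrix (Fin n) (Fin n) ℝ}
    {F : Matrix (Fin n) (Fin n) ℝ} {t : ℝ} :
    HasDerivAt f F t ↔ ∀ i j, HasDerivAt (fun s => f s i j) (F i j) t := by
  constructor
  · intro hf i j
    exact (Matrix.entryLinearMap ℝ ℝ i j).toContinuousLinearMap.hasFDerivAt.comp_hasDerivAt t hf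
  · intro hf
    let e : (Fin n → Fin n → ℝ) ≃L[ℝ] Matrix (Fin n) (Fin n) ℝ :=
      (Matrix.ofLinearEquiv ℝ).toContinuousLinearEquiv
    have h1 : HasDerivAt (fun s => (Matrix.of.symm (f s) : Fin n → Fin n → ℝ))
        (Matrix.of.symm F) t := by
      rw [hasDerivAt_pi]; intro i; rw [hasDerivAt_pi]; intro j; exact hf i j
    exact e.hasFDerivAt.comp_hasDerivAt t h1

theorem aux_hasDerivAt_matmul {n : ℕ} {f k : ℝ → Matrix (Fin n) (Fin n) ℝ}
    {F K : Matrix (Fin n) (Fin n) ℝ} {t : ℝ}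
    (hf : HasDerivAt f F t) (hk : HasDerivAt k K t) :
    HasDerivAt (fun s => f s * k s) (F * k t + f t * K) t := by
  have hfe : ∀ i j, HasDerivAt (fun s => f s i j) (F i j) t := fun i j =>
    aux_hasDerivAt_entries.1 hf i j
  have hke : ∀ i j, HasDerivAt (fun s => k s i j) (K i j) t := fun i j =>
    aux_hasDerivAt_entries.1 hk i j
  rw [aux_hasDerivAt_entries]; intro i j
  have : HasDerivAt (fun s => ∑ l, f s i l * k s l j)
      (∑ l, (F i l * k t l j + f t i l * K l j)) t :=
    HasDerivAt.fun_sum fun l _ => (hfe i l).mul (hke l j)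
  simpa [Matrix.mul_apply, Matrix.add_apply, Finset.sum_add_distrib] using this

theorem aux_hasDerivAt_exp_comp {n : ℕ} (X : Matrix (Fin n) (Fin n) ℝ)
    {b : ℝ → ℝ} {b' c : ℝ} (hb : HasDerivAt b b' c) :
    HasDerivAt (fun s : ℝ => NormedSpace.exp (b s • X))
      (b' • (NormedSpace.exp (b c • X) * X)) c := by
  rw [aux_hasDerivAt_entries]; intro i j
  have := (aux_exp_smul_entry_hasDerivAt X (b c) i j).comp c hb
  rw [Matrix.smul_apply, smul_eq_mul, mul_comm b']
  exact this

end auxPi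

attribute [local instance] Matrix.normedAddCommGroup Matrix.normedSpace

set_option maxHeartbeats 2000000 in
/-- Explicit geodesic of the (pointwise) Ebin L²-metric on positive definite
symmetric matrices, in the case `Tr(H₀²) > 0`, `Tr(H) ≥ 0`. -/
theorem ebin_geodesic_explicit_solution {n : ℕ} (hn : 2 ≤ n)
    (g₀ h H H₀ : Matrix (Fin n) (Fin n) ℝ) (τ κ : ℝ)
    (hg₀pd : g₀.PosDef) (hg₀s : g₀.IsSymm) (hhs : h.IsSymm)
    (hH : H = g₀⁻¹ * h) (hτ : τ = H.trace)
    (hH₀ : H₀ = H - (τ / (n : ℝ)) • (1 : Matrix (Fin n) (Fin n) ℝ))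
    (hκ : κ = (H₀ * H₀).trace) (hκpos : 0 < κ) (hτnn : 0 ≤ τ)
    (a b : ℝ → ℝ)
    (ha : ∀ t, a t = (2 / (n : ℝ)) *
      Real.log ((1 + t * τ / 4) ^ 2 + ((n : ℝ) * κ / 16) * t ^ 2))
    (hb : ∀ t, b t = (4 / Real.sqrt ((n : ℝ) * κ)) *
      Real.arctan ((Real.sqrt ((n : ℝ) * κ) * t) / (4 + t * τ)))
    (g : ℝ → Matrix (Fin n) (Fin n) ℝ)
    (hg : ∀ t, g t = g₀ * NormedSpace.exp
      (a t • (1 : Matrix (Fin n) (Fin n) ℝ) + b t • H₀)) :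
    g 0 = g₀ ∧ deriv g 0 = h ∧
    ∀ t, 0 ≤ t →
      deriv (deriv g) t =
        ((1 / 4) * ((g t)⁻¹ * deriv g t * (g t)⁻¹ * deriv g t).trace) • g t
          + deriv g t * (g t)⁻¹ * deriv g t
          - ((1 / 2) * ((g t)⁻¹ * deriv g t).trace) • deriv g t := by
  have hN : (0:ℝ) < (n:ℝ) := by exact_mod_cast Nat.lt_of_lt_of_le Nat.zero_lt_two hn
  have hUopen : IsOpen {s : ℝ | 0 < 4 + s * τ} := by
    have e : {s : ℝ | 0 < 4 + s * τ} = (fun s : ℝ => 4 + s * τ) ⁻¹' Set.Ioi 0 := rfl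
    rw [e]
    exact IsOpen.preimage (continuous_const.add (continuous_id.mul continuous_const)) isOpen_Ioi
  have hNne : ((n:ℝ)) ≠ 0 := hN.ne'
  set D : ℝ → ℝ := fun t => (1 + t * τ / 4) ^ 2 + ((n:ℝ) * κ / 16) * t ^ 2 with hDdef
  set D1 : ℝ → ℝ := fun t => τ / 2 * (1 + t * τ / 4) + (n:ℝ) * κ / 8 * t with hD1def
  have hD : ∀ t, 0 < D t := by
    intro t
    rcases eq_or_ne t 0 with rfl | ht
    · simp [hDdef]
    · have h1 : 0 < ((n:ℝ) * κ / 16) * t ^ 2 := by positivity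
      have h2 : 0 ≤ (1 + t * τ / 4) ^ 2 := sq_nonneg _
      simp only [hDdef]; linarith
  have hDd : ∀ t, HasDerivAt D (D1 t) t := by
    intro t
    have h1 : HasDerivAt (fun s : ℝ => 1 + s * τ / 4) (τ / 4) t := by
      simpa using (((hasDerivAt_id t).mul_const τ).div_const 4).const_add 1
    have h2 := h1.pow 2
    have h3 := (hasDerivAt_pow 2 t).const_mul ((n:ℝ) * κ / 16)
    have := h2.add h3
    rw [hDdef, hD1def]
    refine this.congr_deriv ?_
    push_cast
    ring
  have hD1d : ∀ t, HasDerivAt D1 (τ ^ 2 / 8 + (n:ℝ) * κ / 8) t := by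
    intro t
    have h1 : HasDerivAt (fun s : ℝ => 1 + s * τ / 4) (τ / 4) t := by
      simpa using (((hasDerivAt_id t).mul_const τ).div_const 4).const_add 1
    have h2 := (h1.const_mul (τ / 2)).add ((hasDerivAt_id t).const_mul ((n:ℝ) * κ / 8))
    rw [hD1def]
    refine h2.congr_deriv ?_
    ring
  set A1 : ℝ → ℝ := fun t => 2 / (n:ℝ) * (D1 t / D t) with hA1def
  set B1 : ℝ → ℝ := fun t => 1 / D t with hB1def
  set A2 : ℝ → ℝ := fun t =>
    2 / (n:ℝ) * (((τ ^ 2 / 8 + (n:ℝ) * κ / 8) * D t - D1 t * D1 t) / D t ^ 2) with hA2def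
  set B2 : ℝ → ℝ := fun t => -(D1 t / D t ^ 2) with hB2def
  have had : ∀ t, HasDerivAt a (A1 t) t := by
    intro t
    have haf : a = fun s => 2 / (n:ℝ) * Real.log (D s) := by
      funext s; rw [ha s, hDdef]
    rw [haf, hA1def]
    exact ((hDd t).log (hD t).ne').const_mul (2 / (n:ℝ))
  have hA1d : ∀ t, HasDerivAt A1 (A2 t) t := by
    intro t
    have := ((hD1d t).div (hDd t) (hD t).ne').const_mul (2 / (n:ℝ))
    rw [hA1def, hA2def]
    exact this
  have hB1d : ∀ t, HasDerivAt B1 (B2 t) t := by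
    intro t
    have := (hasDerivAt_const t (1:ℝ)).div (hDd t) (hD t).ne'
    rw [hB1def, hB2def]
    refine this.congr_deriv ?_
    ring
  have hbd : ∀ t, 0 < 4 + t * τ → HasDerivAt b (B1 t) t := by
    intro t ht
    set S : ℝ := Real.sqrt ((n:ℝ) * κ) with hSdef
    have hNκ : (0:ℝ) < (n:ℝ) * κ := by positivity
    have hS : 0 < S := Real.sqrt_pos.2 hNκ
    have hS2 : S ^ 2 = (n:ℝ) * κ := Real.sq_sqrt hNκ.le
    have hden : (4 + t * τ) ≠ 0 := ht.ne'
    have hq : HasDerivAt (fun s => S * s / (4 + s * τ))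
        ((S * (4 + t * τ) - S * t * τ) / (4 + t * τ) ^ 2) t := by
      have h1 : HasDerivAt (fun s : ℝ => S * s) S t := by
        simpa using (hasDerivAt_id t).const_mul S
      have h2 : HasDerivAt (fun s : ℝ => 4 + s * τ) τ t := by
        simpa using ((hasDerivAt_id t).mul_const τ).const_add 4
      have := h1.div h2 hden
      exact this
    have hfin := ((Real.hasDerivAt_arctan (S * t / (4 + t * τ))).comp t hq).const_mul (4 / S)
    have hbf : b = fun s => 4 / S * Real.arctan (S * s / (4 + s * τ)) := by
      funext s; rw [hb s]
    rw [hbf, hB1def]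
    refine hfin.congr_deriv ?_
    have h16 : (4 + t * τ) ^ 2 + S ^ 2 * t ^ 2 = 16 * D t := by
      rw [hS2, hDdef]; ring
    have e1 : 1 + (S * t / (4 + t * τ)) ^ 2 = 16 * D t / (4 + t * τ) ^ 2 := by
      rw [div_pow, ← h16]
      field_simp
    simp only [e1]
    have hDne := (hD t).ne'
    field_simp
    ring
  set E : ℝ → Matrix (Fin n) (Fin n) ℝ := fun t => NormedSpace.exp (b t • H₀) with hEdef
  have hgE : ∀ t, g t = Real.exp (a t) • (g₀ * E t) := by
    intro t
    rw [hg t, Matrix.exp_add_of_commute _ _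
      (((Commute.one_left H₀).smul_left (a t)).smul_right (b t)), aux_exp_smul_one, hEdef]
    simp [smul_mul_assoc, mul_smul_comm]
  have hU : ∀ t : ℝ, 0 ≤ t → (0:ℝ) < 4 + t * τ := by
    intro t ht; nlinarith
  set M : ℝ → Matrix (Fin n) (Fin n) ℝ := fun t => A1 t • 1 + B1 t • H₀ with hMdef
  have hgd : ∀ t : ℝ, 0 < 4 + t * τ → HasDerivAt g (g t * M t) t := by
    intro t ht
    have hexp : HasDerivAt (fun s => Real.exp (a s)) (A1 t * Real.exp (a t)) t := by
      have := (Real.hasDerivAt_exp (a t)).comp t (had t)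
      rw [mul_comm] at this
      exact this
    have hE' : HasDerivAt E (B1 t • (E t * H₀)) t := by
      rw [hEdef]; exact aux_hasDerivAt_exp_comp H₀ (hbd t ht)
    have h2 := hexp.smul (aux_hasDerivAt_matmul (hasDerivAt_const t g₀) hE')
    have hgfun : g = fun s => Real.exp (a s) • (g₀ * E s) := funext hgE
    rw [hgfun]
    refine h2.congr_deriv ?_
    rw [hMdef]
    simp only [Matrix.zero_mul, zero_add, Matrix.mul_add, mul_smul_comm, smul_mul_assoc,
      Matrix.mul_one, smul_smul, Matrix.mul_assoc, smul_add]
    rw [mul_comm (A1 t) (Real.exp (a t))]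
    module
  have hM'd : ∀ t, HasDerivAt M (A2 t • 1 + B2 t • H₀) t := by
    intro t; rw [hMdef]
    exact ((hA1d t).smul_const 1).add ((hB1d t).smul_const H₀)
  have hdetg₀ : IsUnit g₀.det := isUnit_iff_ne_zero.2 hg₀pd.det_pos.ne'
  have hdetg : ∀ t, IsUnit (g t).det := by
    intro t
    have hEinv : E t * NormedSpace.exp (-(b t • H₀)) = 1 := by
      rw [hEdef]; exact aux_exp_mul_exp_neg _
    have hdetE : IsUnit (E t).det := by
      have := congrArg Matrix.det hEinv
      rw [Matrix.det_mul, Matrix.det_one] at this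
      exact IsUnit.of_mul_eq_one _ this
    rw [hgE t, Matrix.det_smul, Matrix.det_mul]
    exact (isUnit_iff_ne_zero.2 (pow_ne_zero _ (Real.exp_ne_zero _))).mul (hdetg₀.mul hdetE)
  have hinvl : ∀ t, (g t)⁻¹ * g t = 1 := fun t => Matrix.nonsing_inv_mul _ (hdetg t)
  have htr0 : H₀.trace = 0 := by
    rw [hH₀, Matrix.trace_sub, Matrix.trace_smul, Matrix.trace_one, ← hτ]
    simp only [smul_eq_mul]
    field_simp
    simp
  have htr02 : (H₀ * H₀).trace = κ := hκ.symm
  have htrM : ∀ t, (M t).trace = (n:ℝ) * A1 t := by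
    intro t; rw [hMdef]
    simp only [Matrix.trace_add, Matrix.trace_smul, Matrix.trace_one, htr0, smul_eq_mul,
      mul_zero, add_zero, Fintype.card_fin]
    ring
  have htrM2 : ∀ t, (M t * M t).trace = (n:ℝ) * A1 t ^ 2 + κ * B1 t ^ 2 := by
    intro t; rw [hMdef]
    simp only [Matrix.add_mul, Matrix.mul_add, smul_mul_assoc, mul_smul_comm, Matrix.mul_one,
      Matrix.one_mul, smul_smul, Matrix.trace_add, Matrix.trace_smul, Matrix.trace_one, htr0,
      htr02, smul_eq_mul, mul_zero, add_zero, Fintype.card_fin]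
    ring
  have key : ∀ t, 2 * (τ ^ 2 / 8 + (n:ℝ) * κ / 8) * D t - D1 t * D1 t = (n:ℝ) * κ / 4 := by
    intro t; rw [hDdef, hD1def]; ring
  have hscalA : ∀ t, A2 t =
      1 / 4 * ((n:ℝ) * A1 t ^ 2 + κ * B1 t ^ 2) - 1 / 2 * ((n:ℝ) * A1 t) * A1 t := by
    intro t
    have e : ∀ d d1 : ℝ, d ≠ 0 →
        2 * (τ ^ 2 / 8 + (n:ℝ) * κ / 8) * d - d1 * d1 = (n:ℝ) * κ / 4 →
        2 / (n:ℝ) * (((τ ^ 2 / 8 + (n:ℝ) * κ / 8) * d - d1 * d1) / d ^ 2) =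
          1 / 4 * ((n:ℝ) * (2 / (n:ℝ) * (d1 / d)) ^ 2 + κ * (1 / d) ^ 2)
            - 1 / 2 * ((n:ℝ) * (2 / (n:ℝ) * (d1 / d))) * (2 / (n:ℝ) * (d1 / d)) := by
      intro d d1 hd hk
      have hk' : (τ ^ 2 / 8 + (n:ℝ) * κ / 8) * d = ((n:ℝ) * κ / 4 + d1 * d1) / 2 := by
        linarith
      rw [hk']
      field_simp
      ring
    rw [hA2def, hA1def, hB1def]
    exact e (D t) (D1 t) (hD t).ne' (key t)
  have hscalB : ∀ t, B2 t = -(1 / 2 * ((n:ℝ) * A1 t) * B1 t) := by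
    intro t
    have hd := (hD t).ne'
    rw [hB2def, hA1def, hB1def]
    field_simp
  have hg0 : g 0 = g₀ := by
    have ha0 : a 0 = 0 := by rw [ha]; norm_num
    have hb0 : b 0 = 0 := by rw [hb]; norm_num
    rw [hg 0, ha0, hb0]
    simp [NormedSpace.exp_zero]
  refine ⟨hg0, ?_, ?_⟩
  · have := (hgd 0 (by norm_num)).deriv
    rw [show deriv g 0 = g 0 * M 0 from this, hg0]
    have hA10 : A1 0 = τ / (n:ℝ) := by
      rw [hA1def, hD1def, hDdef]
      norm_num
    have hB10 : B1 0 = 1 := by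
      rw [hB1def, hDdef]; norm_num
    rw [hMdef]
    simp only [hA10, hB10, one_smul]
    rw [hH₀, hH]
    have e : (τ / (n:ℝ)) • (1 : Matrix (Fin n) (Fin n) ℝ) + (g₀⁻¹ * h - (τ / (n:ℝ)) • 1)
        = g₀⁻¹ * h := by abel
    rw [e, ← Matrix.mul_assoc, Matrix.mul_nonsing_inv _ hdetg₀, Matrix.one_mul]
  · intro t ht
    have htU : (0:ℝ) < 4 + t * τ := hU t ht
    have hev : deriv g =ᶠ[nhds t] fun s => g s * M s := by
      filter_upwards [hUopen.mem_nhds htU] with s hs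
      exact (hgd s hs).deriv
    have hdg : deriv g t = g t * M t := (hgd t htU).deriv
    have hdd : deriv (deriv g) t
        = g t * M t * M t + g t * (A2 t • 1 + B2 t • H₀) := by
      rw [show deriv (deriv g) t = deriv (fun s => g s * M s) t from hev.deriv_eq]
      exact (aux_hasDerivAt_matmul (hgd t htU) (hM'd t)).deriv
    rw [hdd, hdg]
    have e1 : (g t)⁻¹ * (g t * M t) = M t := by
      rw [← Matrix.mul_assoc, hinvl, Matrix.one_mul]
    have e2 : (g t)⁻¹ * (g t * M t) * (g t)⁻¹ * (g t * M t) = M t * M t := by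
      rw [e1, Matrix.mul_assoc, e1]
    have e3 : g t * M t * (g t)⁻¹ * (g t * M t) = g t * M t * M t := by
      rw [Matrix.mul_assoc (g t * M t), e1]
    rw [e2, e3, e1, htrM2 t, htrM t]
    have eA := hscalA t
    have eB := hscalB t
    rw [hMdef]
    simp only [Matrix.mul_add, mul_smul_comm, Matrix.mul_one, smul_add, smul_smul]
    rw [eA, eB]
    module
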